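/- arXiv:2501.19362 — 6 statements merged into one kernel-verified Lean document; each statement's English description precedes it below -/
import Mathlib

section
/- Let E ∈ ℝ and Z : [0,∞) → (0,∞) satisfy: (i) for every b ∈ (0,1) there exists T_b > 0 such that e^{T E} Z(T) ≥ b^T for all T ≥ T_b, and (ii) there exists ρ̃ > 0 such that Z(2T) ≤ (1/min(1,ρ̃)) Z(T)² for all T ≥ 0. Then for every T₀ > 0 we have e^{T₀ E} Z(T₀) ≥ min(1,ρ̃); in particular lim inf_{T→∞} e^{TE}Z(T) ≥ min(1,ρ̃) > 0. -/
open Real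

theorem doubling_iteration_lower_bound
    (E : ℝ) (Z : ℝ → ℝ) (ρ : ℝ) (hρ : 0 < ρ)
    (hZpos : ∀ T : ℝ, 0 ≤ T → 0 < Z T)
    (hlow : ∀ b : ℝ, b ∈ Set.Ioo (0 : ℝ) 1 →
      ∃ Tb : ℝ, 0 < Tb ∧ ∀ T : ℝ, Tb ≤ T → b ^ T ≤ Real.exp (T * E) * Z T)
    (hdoub : ∀ T : ℝ, 0 ≤ T → Z (2 * T) ≤ (min 1 ρ)⁻¹ * (Z T) ^ 2) :
    ∀ T₀ : ℝ, 0 < T₀ → min 1 ρ ≤ Real.exp (T₀ * E) * Z T₀ := by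
  intro T₀ hT₀
  set c := min 1 ρ with hc_def
  have hc : 0 < c := lt_min one_pos hρ
  by_contra hlt
  push_neg at hlt
  set W : ℝ → ℝ := fun T => Real.exp (T * E) * Z T with hW
  have hWpos : ∀ T, 0 ≤ T → 0 < W T := fun T hT => mul_pos (Real.exp_pos _) (hZpos T hT)
  have hWdoub : ∀ T, 0 ≤ T → W (2 * T) ≤ c⁻¹ * (W T) ^ 2 := by
    intro T hT
    have h1 := hdoub T hT
    have hexp : Real.exp (2 * T * E) = (Real.exp (T * E)) ^ 2 := by
      rw [sq, ← Real.exp_add]; ring_nf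
    calc W (2 * T) = Real.exp (2 * T * E) * Z (2 * T) := rfl
      _ ≤ Real.exp (2 * T * E) * (c⁻¹ * (Z T) ^ 2) :=
          mul_le_mul_of_nonneg_left h1 (Real.exp_pos _).le
      _ = c⁻¹ * (W T) ^ 2 := by rw [hexp]; simp only [hW]; ring
  set q : ℝ := W T₀ / c with hq_def
  have hq0 : 0 < q := div_pos (hWpos T₀ hT₀.le) hc
  have hq1 : q < 1 := (div_lt_one hc).mpr hlt
  -- induction claim
  have hiter : ∀ k : ℕ, W (2 ^ k * T₀) ≤ c * q ^ (2 ^ k) := by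
    intro k
    induction k with
    | zero =>
        simp only [pow_zero, pow_one, one_mul]
        rw [hq_def, mul_div_cancel₀ _ hc.ne']
    | succ k ih =>
        have hpos : (0:ℝ) ≤ 2 ^ k * T₀ := by positivity
        have h2 : W (2 ^ (k + 1) * T₀) = W (2 * (2 ^ k * T₀)) := by ring_nf
        have hsq : (W (2 ^ k * T₀)) ^ 2 ≤ (c * q ^ (2 ^ k)) ^ 2 :=
          pow_le_pow_left₀ (hWpos _ hpos).le ih 2
        calc W (2 ^ (k + 1) * T₀) = W (2 * (2 ^ k * T₀)) := h2
          _ ≤ c⁻¹ * (W (2 ^ k * T₀)) ^ 2 := hWdoub _ hpos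
          _ ≤ c⁻¹ * (c * q ^ (2 ^ k)) ^ 2 := by
              exact mul_le_mul_of_nonneg_left hsq (by positivity)
          _ = c * q ^ (2 ^ (k + 1)) := by
              have hq2 : q ^ (2 ^ (k + 1)) = (q ^ (2 ^ k)) ^ 2 := by
                rw [pow_succ 2 k, pow_mul]
              rw [hq2, mul_pow]
              field_simp
  set r : ℝ := q ^ (T₀⁻¹) with hr_def
  have hr0 : 0 < r := Real.rpow_pos_of_pos hq0 _
  have hr1 : r < 1 := Real.rpow_lt_one hq0.le hq1 (inv_pos.mpr hT₀)
  have hrT : r ^ T₀ = q := by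
    rw [hr_def, ← Real.rpow_mul hq0.le, inv_mul_cancel₀ hT₀.ne', Real.rpow_one]
  set b : ℝ := (1 + r) / 2 with hb_def
  have hb0 : 0 < b := by rw [hb_def]; linarith
  have hb1 : b < 1 := by rw [hb_def]; linarith
  have hrb : r < b := by rw [hb_def]; linarith
  obtain ⟨Tb, hTb0, hTbound⟩ := hlow b ⟨hb0, hb1⟩
  set a : ℝ := b / r with ha_def
  have ha1 : 1 < a := (one_lt_div hr0).mpr hrb
  obtain ⟨n, hn⟩ := pow_unbounded_of_one_lt c ha1
  obtain ⟨m, hm⟩ := exists_nat_gt (max Tb n / T₀)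
  set T : ℝ := 2 ^ m * T₀ with hT_def
  have h2m : (m : ℝ) ≤ 2 ^ m := by
    have := Nat.lt_two_pow_self (n := m)
    exact_mod_cast this.le
  have hmT : max Tb n < (m : ℝ) * T₀ := by
    rw [← div_lt_iff₀ hT₀]; exact hm
  have hTge : max Tb n ≤ T := by
    have : (m : ℝ) * T₀ ≤ T := by
      rw [hT_def]; exact mul_le_mul_of_nonneg_right h2m hT₀.le
    linarith
  have hTb_le : Tb ≤ T := le_trans (le_max_left _ _) hTge
  have hn_le : (n : ℝ) ≤ T := le_trans (le_max_right _ _) hTge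
  -- W T ≤ c * r ^ T (rpow)
  have hWT : W T ≤ c * r ^ T := by
    have h1 := hiter m
    have h2 : r ^ T = q ^ (2 ^ m) := by
      rw [hT_def, mul_comm ((2:ℝ)^m) T₀, Real.rpow_mul hr0.le, hrT]
      rw [← Real.rpow_natCast q (2 ^ m)]
      push_cast
      ring_nf
    rw [h2]; exact h1
  have hbT : b ^ T ≤ W T := hTbound T hTb_le
  have hrTpos : (0:ℝ) < r ^ T := Real.rpow_pos_of_pos hr0 _
  have haT : a ^ T ≤ c := by
    rw [ha_def, Real.div_rpow hb0.le hr0.le, div_le_iff₀ hrTpos]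
    calc b ^ T ≤ W T := hbT
      _ ≤ c * r ^ T := hWT
  have han : a ^ (n : ℝ) ≤ a ^ T :=
    Real.rpow_le_rpow_of_exponent_le ha1.le hn_le
  rw [Real.rpow_natCast] at han
  linarith
end

section
/- Let K ⊆ ℝ^d be compact and let μ = ∑_{i=1}^n δ_{x_i}, ν = ∑_{j=1}^m δ_{y_j} be finite sums of Dirac measures on K. Suppose the Prohorov distance d(μ,ν) < ε where ε < 1 and ε < (1/2) min{|x−y| : x,y ∈ supp(μ), x ≠ y}. Then n = m and there is a permutation σ of {1,…,n} with max_i |x_i − y_{σ(i)}| < ε. -/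
open MeasureTheory Metric Set
open scoped ENNReal

lemma sum_dirac_apply_count {X : Type*} [MeasurableSpace X] {k : ℕ} (z : Fin k → X)
    (A : Set X) (hA : MeasurableSet A) [DecidablePred (fun i => z i ∈ A)] :
    (∑ i, Measure.dirac (z i)) A = ((Finset.univ.filter (fun i => z i ∈ A)).card : ℝ≥0∞) := by
  rw [Measure.finset_sum_apply]
  simp_rw [Measure.dirac_apply' _ hA, Set.indicator_apply]
  simp [Finset.sum_boole]

theorem prokhorov_close_dirac_sums_matching
    {d : ℕ} (K : Set (EuclideanSpace ℝ (Fin d))) (hK : IsCompact K)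
    {n m : ℕ} (x : Fin n → EuclideanSpace ℝ (Fin d)) (y : Fin m → EuclideanSpace ℝ (Fin d))
    (hx : ∀ i, x i ∈ K) (hy : ∀ j, y j ∈ K)
    (ε : ℝ) (hε1 : ε < 1)
    (hεsep : ∀ i j, x i ≠ x j → 2 * ε < dist (x i) (x j))
    (hclose : levyProkhorovDist (∑ i, Measure.dirac (x i)) (∑ j, Measure.dirac (y j)) < ε) :
    n = m ∧ ∃ σ : Fin n ≃ Fin m, ∀ i, dist (x i) (y (σ i)) < ε := by
  classical
  set μ := ∑ i, Measure.dirac (x i) with hμ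
  set ν := ∑ j, Measure.dirac (y j) with hν
  have hε0 : 0 < ε := lt_of_le_of_lt ENNReal.toReal_nonneg hclose
  have hedist : levyProkhorovEDist μ ν < ENNReal.ofReal ε :=
    (ENNReal.lt_ofReal_iff_toReal_lt (levyProkhorovEDist_ne_top μ ν)).mpr hclose
  have hL : ∀ A : Set (EuclideanSpace ℝ (Fin d)), MeasurableSet A →
      μ A ≤ ν (thickening ε A) + ENNReal.ofReal ε := by
    intro A hA
    have h := left_measure_le_of_levyProkhorovEDist_lt hedist hA
    rwa [ENNReal.toReal_ofReal hε0.le] at h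
  have hR : ∀ A : Set (EuclideanSpace ℝ (Fin d)), MeasurableSet A →
      ν A ≤ μ (thickening ε A) + ENNReal.ofReal ε := by
    intro A hA
    have h := right_measure_le_of_levyProkhorovEDist_lt hedist hA
    rwa [ENNReal.toReal_ofReal hε0.le] at h
  have hnum : ∀ a b : ℕ, (a : ℝ≥0∞) ≤ (b : ℝ≥0∞) + ENNReal.ofReal ε → a ≤ b := by
    intro a b h
    have h2 : (a : ℝ≥0∞) < (b : ℝ≥0∞) + 1 :=
      lt_of_le_of_lt h (ENNReal.add_lt_add_left (by simp) (ENNReal.ofReal_lt_one.mpr hε1))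
    have h3 : (a : ℝ≥0∞) < ((b + 1 : ℕ) : ℝ≥0∞) := by push_cast; exact h2
    exact Nat.lt_succ_iff.mp (Nat.cast_lt.mp h3)
  have huniq : ∀ (j : Fin m) (i i' : Fin n), dist (x i) (y j) < ε → dist (x i') (y j) < ε →
      x i = x i' := by
    intro j i i' h h'
    by_contra hne
    have hs := hεsep i i' hne
    have ht : dist (x i) (x i') ≤ dist (x i) (y j) + dist (y j) (x i') := dist_triangle _ _ _
    rw [dist_comm (y j)] at ht
    linarith
  -- every y j is within ε of some x i
  have hexists : ∀ j, ∃ i, dist (x i) (y j) < ε := by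
    intro j
    by_contra hcon
    push_neg at hcon
    have h1 := hR {y j} (measurableSet_singleton _)
    rw [thickening_singleton] at h1
    have hν1 : (1 : ℝ≥0∞) ≤ ν {y j} := by
      rw [hν, sum_dirac_apply_count y _ (measurableSet_singleton _)]
      have : j ∈ Finset.univ.filter (fun j' => y j' ∈ ({y j} : Set _)) := by simp
      exact_mod_cast Nat.one_le_cast.mpr (Finset.card_pos.mpr ⟨j, this⟩)
    have hμ0 : μ (ball (y j) ε) = 0 := by
      rw [hμ, sum_dirac_apply_count x _ measurableSet_ball]
      have : Finset.univ.filter (fun i => x i ∈ ball (y j) ε) = ∅ := by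
        apply Finset.filter_false_of_mem
        intro i _
        simp only [mem_ball]
        exact not_lt.mpr (hcon i)
      rw [this]
      simp
    rw [hμ0, zero_add] at h1
    have : (1 : ℝ≥0∞) ≤ ENNReal.ofReal ε := le_trans hν1 h1
    exact absurd (lt_of_le_of_lt this (ENNReal.ofReal_lt_one.mpr hε1)) (lt_irrefl _)
  -- fiber counts match
  have hcount : ∀ i₀ : Fin n,
      (Finset.univ.filter (fun i => x i = x i₀)).card
        = (Finset.univ.filter (fun j => dist (x i₀) (y j) < ε)).card := by
    intro i₀
    apply le_antisymm
    · -- a ≤ b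
      apply hnum
      have h1 := hL {x i₀} (measurableSet_singleton _)
      rw [thickening_singleton] at h1
      have hμa : μ {x i₀} = ((Finset.univ.filter (fun i => x i = x i₀)).card : ℝ≥0∞) := by
        rw [hμ, sum_dirac_apply_count x _ (measurableSet_singleton _)]
        congr 1
      have hνb : ν (ball (x i₀) ε)
          = ((Finset.univ.filter (fun j => dist (x i₀) (y j) < ε)).card : ℝ≥0∞) := by
        rw [hν, sum_dirac_apply_count y _ measurableSet_ball]
        congr 1
        apply congrArg
        apply Finset.filter_congr
        intro j _
        simp [mem_ball, dist_comm]
      rw [hμa, hνb] at h1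
      exact h1
    · -- b ≤ a
      apply hnum
      set B : Set (EuclideanSpace ℝ (Fin d)) := y '' {j | dist (x i₀) (y j) < ε} with hB
      have hBm : MeasurableSet B := (Set.toFinite B).measurableSet
      have h1 := hR B hBm
      have hνB : ((Finset.univ.filter (fun j => dist (x i₀) (y j) < ε)).card : ℝ≥0∞) ≤ ν B := by
        rw [hν, sum_dirac_apply_count y _ hBm]
        norm_cast
        apply Finset.card_le_card
        intro j hj
        simp only [Finset.mem_filter, Finset.mem_univ, true_and] at hj ⊢
        exact ⟨j, hj, rfl⟩
      have hμT : μ (thickening ε B)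
          ≤ ((Finset.univ.filter (fun i => x i = x i₀)).card : ℝ≥0∞) := by
        rw [hμ, sum_dirac_apply_count x _ isOpen_thickening.measurableSet]
        norm_cast
        apply Finset.card_le_card
        intro i hi
        simp only [Finset.mem_filter, Finset.mem_univ, true_and] at hi ⊢
        rw [mem_thickening_iff] at hi
        obtain ⟨w, hw, hdw⟩ := hi
        obtain ⟨j, hj, rfl⟩ := hw
        exact huniq j i i₀ hdw hj
      calc ((Finset.univ.filter (fun j => dist (x i₀) (y j) < ε)).card : ℝ≥0∞)
          ≤ ν B := hνB
        _ ≤ μ (thickening ε B) + ENNReal.ofReal ε := h1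
        _ ≤ _ + ENNReal.ofReal ε := add_le_add hμT le_rfl
  -- build the matching
  set cy : Fin m → EuclideanSpace ℝ (Fin d) := fun j => x (Classical.choose (hexists j)) with hcy
  have hcyspec : ∀ j, dist (cy j) (y j) < ε := fun j => Classical.choose_spec (hexists j)
  have hcyiff : ∀ (i₀ : Fin n) (j : Fin m), cy j = x i₀ ↔ dist (x i₀) (y j) < ε := by
    intro i₀ j
    constructor
    · intro h; rw [← h]; exact hcyspec j
    · intro h; exact huniq j (Classical.choose (hexists j)) i₀ (hcyspec j) h
  have hcard : ∀ c : EuclideanSpace ℝ (Fin d),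
      Fintype.card {i // x i = c} = Fintype.card {j // cy j = c} := by
    intro c
    by_cases hc : ∃ i₀, x i₀ = c
    · obtain ⟨i₀, rfl⟩ := hc
      rw [Fintype.card_subtype, Fintype.card_subtype, hcount i₀]
      congr 1
      apply Finset.filter_congr
      intro j _
      simp [hcyiff i₀ j]
    · push_neg at hc
      have h1 : IsEmpty {i // x i = c} := ⟨fun ⟨i, hi⟩ => hc i hi⟩
      have h2 : IsEmpty {j // cy j = c} :=
        ⟨fun ⟨j, hj⟩ => hc (Classical.choose (hexists j)) hj⟩
      rw [Fintype.card_eq_zero, Fintype.card_eq_zero]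
  have hfib : ∀ c, Nonempty ({i // x i = c} ≃ {j // cy j = c}) :=
    fun c => Fintype.card_eq.mp (hcard c)
  let σ : Fin n ≃ Fin m := Equiv.ofFiberEquiv (fun c => (hfib c).some)
  have hσ : ∀ i, cy (σ i) = x i := fun i => Equiv.ofFiberEquiv_map _ i
  refine ⟨by simpa using Fintype.card_congr σ, σ, fun i => ?_⟩
  have := hcyspec (σ i)
  rwa [hσ i] at this
end

section
/- Define φ : ℕ₀ → ℤ by φ(n) = n/2 if n is even and φ(n) = −(n+1)/2 if n is odd, extended to φ : [0,∞) → ℝ \ (−1,0) piecewise linearly with slope 1 on intervals [2n, 2n+1) and slope −1 on [2n+1, 2n+2). Then φ : ℕ₀ → ℤ is a bijection, and |φ(t) − φ(s)| ≥ |t − s|/4 for all s, t ≥ 0 with |⌊s⌋ − ⌊t⌋| ≠ 2. -/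
/-- The folding bijection `ℕ → ℤ`: `φ(n) = n/2` for even `n`, `φ(n) = -(n+1)/2` for odd `n`. -/
def foldMapNat (n : ℕ) : ℤ := if Even n then (n : ℤ) / 2 else -(((n : ℤ) + 1) / 2)

/-- The piecewise linear extension of the folding bijection to `[0,∞)`:
slope `1` on intervals `[2n, 2n+1)` and slope `-1` on `[2n+1, 2n+2)`. -/
noncomputable def foldMapReal (t : ℝ) : ℝ :=
  if Even ⌊t⌋ then ((⌊t⌋ : ℝ) / 2) + (t - ⌊t⌋)
  else -(((⌊t⌋ : ℝ) + 1) / 2) - (t - ⌊t⌋)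

lemma foldMapNat_even (k : ℕ) : foldMapNat (2 * k) = k := by
  unfold foldMapNat
  rw [if_pos ⟨k, two_mul k⟩]
  push_cast
  omega

lemma foldMapNat_odd (k : ℕ) : foldMapNat (2 * k + 1) = -(k + 1) := by
  unfold foldMapNat
  rw [if_neg (by simp [Nat.even_add_one, parity_simps])]
  push_cast
  omega

lemma foldMapNat_bijective : Function.Bijective foldMapNat := by
  constructor
  · intro a b h
    rcases Nat.even_or_odd a with ⟨k, rfl⟩ | ⟨k, rfl⟩ <;>
      rcases Nat.even_or_odd b with ⟨l, rfl⟩ | ⟨l, rfl⟩ <;>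
      simp only [← two_mul, foldMapNat_even, foldMapNat_odd] at h ⊢ <;>
      omega
  · intro z
    rcases le_or_gt 0 z with hz | hz
    · exact ⟨2 * z.toNat, by rw [foldMapNat_even]; omega⟩
    · exact ⟨2 * (-z - 1).toNat + 1, by rw [foldMapNat_odd]; omega⟩

lemma foldMapReal_even {t : ℝ} (h : Even ⌊t⌋) : foldMapReal t = t - (⌊t⌋ : ℝ) / 2 := by
  unfold foldMapReal
  rw [if_pos h]
  ring

lemma foldMapReal_odd {t : ℝ} (h : ¬Even ⌊t⌋) : foldMapReal t = ((⌊t⌋ : ℝ) - 1) / 2 - t := by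
  unfold foldMapReal
  rw [if_neg h]
  ring

lemma foldMap_key {s t : ℝ} (hs : 0 ≤ s) (ht : 0 ≤ t) (hst : s ≤ t)
    (h2 : |⌊s⌋ - ⌊t⌋| ≠ 2) :
    |t - s| / 4 ≤ |foldMapReal t - foldMapReal s| := by
  have hms : (⌊s⌋ : ℝ) ≤ s := Int.floor_le s
  have hms' : s < (⌊s⌋ : ℝ) + 1 := Int.lt_floor_add_one s
  have hnt : (⌊t⌋ : ℝ) ≤ t := Int.floor_le t
  have hnt' : t < (⌊t⌋ : ℝ) + 1 := Int.lt_floor_add_one t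
  have hm0 : (0 : ℤ) ≤ ⌊s⌋ := Int.floor_nonneg.mpr hs
  have hn0 : (0 : ℤ) ≤ ⌊t⌋ := Int.floor_nonneg.mpr ht
  have hmn : ⌊s⌋ ≤ ⌊t⌋ := Int.floor_le_floor hst
  have hm0' : (0 : ℝ) ≤ (⌊s⌋ : ℝ) := by exact_mod_cast hm0
  have hn0' : (0 : ℝ) ≤ (⌊t⌋ : ℝ) := by exact_mod_cast hn0
  have hts : |t - s| = t - s := abs_of_nonneg (by linarith)
  -- if the parities agree and ⌊s⌋ ≠ ⌊t⌋, then ⌊t⌋ - ⌊s⌋ ≥ 4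
  have hgap : ⌊s⌋ % 2 = ⌊t⌋ % 2 → ⌊s⌋ ≠ ⌊t⌋ → (4 : ℝ) ≤ (⌊t⌋ : ℝ) - (⌊s⌋ : ℝ) := by
    intro hp hne
    have habs : |⌊s⌋ - ⌊t⌋| = ⌊t⌋ - ⌊s⌋ := by
      rw [abs_sub_comm, abs_of_nonneg (by omega)]
    rw [habs] at h2
    have h4 : (4 : ℤ) ≤ ⌊t⌋ - ⌊s⌋ := by omega
    have h4' : ((4 : ℤ) : ℝ) ≤ ((⌊t⌋ - ⌊s⌋ : ℤ) : ℝ) := by exact_mod_cast h4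
    push_cast at h4'
    linarith
  by_cases hem : Even ⌊s⌋ <;> by_cases hen : Even ⌊t⌋
  · -- both even
    rw [foldMapReal_even hen, foldMapReal_even hem, hts]
    by_cases hne : ⌊s⌋ = ⌊t⌋
    · rw [hne]
      have heq : t - (⌊t⌋ : ℝ) / 2 - (s - (⌊t⌋ : ℝ) / 2) = t - s := by ring
      rw [heq, abs_of_nonneg (by linarith)]
      linarith
    · have h4 := hgap (by rw [Int.even_iff] at hem hen; omega) hne
      have hA := le_abs_self (t - (⌊t⌋ : ℝ) / 2 - (s - (⌊s⌋ : ℝ) / 2))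
      linarith
  · -- ⌊s⌋ even, ⌊t⌋ odd
    rw [foldMapReal_odd hen, foldMapReal_even hem, hts]
    have hA := neg_abs_le (((⌊t⌋ : ℝ) - 1) / 2 - t - (s - (⌊s⌋ : ℝ) / 2))
    linarith
  · -- ⌊s⌋ odd, ⌊t⌋ even
    rw [foldMapReal_even hen, foldMapReal_odd hem, hts]
    have hA := le_abs_self (t - (⌊t⌋ : ℝ) / 2 - (((⌊s⌋ : ℝ) - 1) / 2 - s))
    linarith
  · -- both odd
    rw [foldMapReal_odd hen, foldMapReal_odd hem, hts]
    by_cases hne : ⌊s⌋ = ⌊t⌋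
    · rw [hne]
      have heq : ((⌊t⌋ : ℝ) - 1) / 2 - t - (((⌊t⌋ : ℝ) - 1) / 2 - s) = s - t := by ring
      rw [heq, abs_of_nonpos (by linarith)]
      linarith
    · have h4 := hgap (by rw [Int.even_iff] at hem hen; omega) hne
      have hA := neg_abs_le (((⌊t⌋ : ℝ) - 1) / 2 - t - (((⌊s⌋ : ℝ) - 1) / 2 - s))
      linarith

theorem foldMap_bijective_and_expanding :
    Function.Bijective foldMapNat ∧
      ∀ s t : ℝ, 0 ≤ s → 0 ≤ t → |⌊s⌋ - ⌊t⌋| ≠ 2 →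
        |t - s| / 4 ≤ |foldMapReal t - foldMapReal s| := by
  refine ⟨foldMapNat_bijective, ?_⟩
  intro s t hs ht h2
  rcases le_total s t with h | h
  · exact foldMap_key hs ht h h2
  · rw [abs_sub_comm t s, abs_sub_comm (foldMapReal t)]
    exact foldMap_key ht hs h (by rwa [abs_sub_comm])
end

section
/- Let H be a self-adjoint operator bounded below on a Hilbert space, E = inf σ(H), P its spectral measure, and Ω a unit vector. Then lim_{T→∞} (1/T) log ⟨Ω, e^{-TH} Ω⟩ = −E provided ⟨Ω, P([E, E+ε))Ω⟩ > 0 for all ε > 0; moreover lim_{T→∞} e^{TE} ⟨Ω, e^{-TH} Ω⟩ = ⟨Ω, P({E}) Ω⟩. -/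
open MeasureTheory Real Filter

/-- Spectral-theoretic limits for the partition function. Here `μ` is the spectral
measure `μ(dx) = ⟨Ω, P(dx) Ω⟩` of the self-adjoint operator `H` in the unit vector `Ω`,
so that `⟨Ω, e^{-TH} Ω⟩ = ∫ e^{-Tx} μ(dx)`, `E = inf σ(H)` means `μ((-∞,E)) = 0`, and the
hypothesis `⟨Ω, P([E,E+ε))Ω⟩ > 0` reads `μ([E,E+ε)) > 0`. -/
theorem partition_function_ground_state_limits
    (μ : Measure ℝ) [IsProbabilityMeasure μ] (E : ℝ)
    (hsupp : μ (Set.Iio E) = 0)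
    (hε : ∀ ε : ℝ, 0 < ε → 0 < μ (Set.Ico E (E + ε))) :
    Tendsto (fun T : ℝ => (1 / T) * Real.log (∫ x, Real.exp (-T * x) ∂μ))
        atTop (nhds (-E)) ∧
      Tendsto (fun T : ℝ => Real.exp (T * E) * ∫ x, Real.exp (-T * x) ∂μ)
        atTop (nhds (μ {E}).toReal) := by
  -- a.e., E ≤ x
  have hae : ∀ᵐ x ∂μ, E ≤ x := by
    rw [ae_iff]
    convert hsupp using 2
    ext x; simp [Set.Iio]
  set h : ℝ → ℝ := fun T => ∫ x, Real.exp (-T * (x - E)) ∂μ with hh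
  have hmeas : ∀ T : ℝ, AEStronglyMeasurable (fun x => Real.exp (-T * (x - E))) μ := fun T =>
    (Real.continuous_exp.comp (continuous_const.mul (continuous_id.sub continuous_const))).aestronglyMeasurable
  have hbd : ∀ T : ℝ, 0 ≤ T → ∀ᵐ x ∂μ, ‖Real.exp (-T * (x - E))‖ ≤ 1 := by
    intro T hT
    filter_upwards [hae] with x hx
    rw [Real.norm_eq_abs, abs_of_pos (Real.exp_pos _)]
    calc Real.exp (-T * (x - E)) ≤ Real.exp 0 := by
          apply Real.exp_le_exp.mpr
          have : 0 ≤ T * (x - E) := mul_nonneg hT (by linarith)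
          linarith
      _ = 1 := Real.exp_zero
  have hint : ∀ T : ℝ, 0 ≤ T → Integrable (fun x => Real.exp (-T * (x - E))) μ := fun T hT =>
    Integrable.mono' (integrable_const 1) (hmeas T) (hbd T hT)
  have hpos : ∀ T : ℝ, 0 ≤ T → 0 < h T := by
    intro T hT
    rw [hh]
    rw [integral_pos_iff_support_of_nonneg_ae
      (Eventually.of_forall fun x => (Real.exp_pos _).le) (hint T hT)]
    have : Function.support (fun x => Real.exp (-T * (x - E))) = Set.univ := by
      ext x; simp [Function.support, Real.exp_ne_zero]
    rw [this]
    simp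
  have hle1 : ∀ T : ℝ, 0 ≤ T → h T ≤ 1 := by
    intro T hT
    calc h T ≤ ∫ _x, (1:ℝ) ∂μ := by
          apply integral_mono_ae (hint T hT) (integrable_const 1)
          filter_upwards [hbd T hT] with x hx
          simpa [Real.norm_eq_abs, abs_of_pos (Real.exp_pos _)] using hx
      _ = 1 := by simp
  -- relation between the two integrals
  have hrel : ∀ T : ℝ, (∫ x, Real.exp (-T * x) ∂μ) = Real.exp (-T * E) * h T := by
    intro T
    rw [hh, ← integral_const_mul]
    congr 1; ext x
    rw [← Real.exp_add]; ring_nf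
  -- second limit
  have h2 : Tendsto h atTop (nhds (μ {E}).toReal) := by
    have key : Tendsto (fun T => ∫ x, Real.exp (-T * (x - E)) ∂μ) atTop
        (nhds (∫ x, Set.indicator {E} (fun _ => (1:ℝ)) x ∂μ)) := by
      apply tendsto_integral_filter_of_dominated_convergence (fun _ => (1:ℝ))
      · exact Eventually.of_forall fun T => hmeas T
      · filter_upwards [eventually_ge_atTop (0:ℝ)] with T hT using hbd T hT
      · exact integrable_const 1
      · filter_upwards [hae] with x hx
        rcases eq_or_lt_of_le hx with heq | hlt
        · have hx1 : x ∈ ({E} : Set ℝ) := by simp [heq.symm]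
          simp only [Set.indicator_of_mem hx1]
          have : (fun T : ℝ => Real.exp (-T * (x - E))) = fun _ => 1 := by
            funext T; rw [← heq]; simp
          rw [this]; exact tendsto_const_nhds
        · have hx' : x ∉ ({E} : Set ℝ) := by simp [ne_of_gt hlt]
          rw [Set.indicator_of_notMem hx']
          have : Tendsto (fun T : ℝ => -T * (x - E)) atTop atBot := by
            have := (tendsto_id (α := ℝ)).atTop_mul_const (sub_pos.mpr hlt)
            have := tendsto_neg_atTop_atBot.comp this
            simpa [neg_mul, Function.comp_def] using this
          exact Real.tendsto_exp_atBot.comp this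
    have : (∫ x, Set.indicator {E} (fun _ => (1:ℝ)) x ∂μ) = (μ {E}).toReal := by
      rw [integral_indicator (measurableSet_singleton E), setIntegral_const]
      simp
      rfl
    rwa [this] at key
  constructor
  · -- first limit
    have hlog0 : Tendsto (fun T => (1 / T) * Real.log (h T)) atTop (nhds 0) := by
      rw [tendsto_order]
      constructor
      · intro a ha
        have hc : 0 < (μ (Set.Ico E (E + (-a/2)))).toReal := by
          refine ENNReal.toReal_pos (hε _ (by linarith)).ne' ?_
          exact (measure_lt_top μ _).ne
        set c := (μ (Set.Ico E (E + (-a/2)))).toReal with hcdef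
        have hclog : Tendsto (fun T : ℝ => Real.log c * T⁻¹) atTop (nhds 0) := by
          simpa using tendsto_inv_atTop_zero.const_mul (Real.log c)
        have hev : ∀ᶠ T : ℝ in atTop, a/2 < Real.log c * T⁻¹ :=
          (hclog.eventually (eventually_gt_nhds (by linarith : a/2 < (0:ℝ))))
        filter_upwards [hev, eventually_gt_atTop (0:ℝ)] with T hT hT0
        -- lower bound h T ≥ exp(-T * (-a/2)) * c
        have hlow : Real.exp (-T * (-a/2)) * c ≤ h T := by
          calc Real.exp (-T * (-a/2)) * c
              ≤ ∫ x in Set.Ico E (E + (-a/2)), Real.exp (-T * (x - E)) ∂μ := by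
                apply setIntegral_ge_of_const_le_real measurableSet_Ico (measure_lt_top μ _).ne
                · intro x hx
                  apply Real.exp_le_exp.mpr
                  have h1 : x - E < -a/2 := by have := hx.2; linarith [hx.1]
                  nlinarith [hx.1, hT0.le]
                · exact (hint T hT0.le).integrableOn
            _ ≤ h T := setIntegral_le_integral (hint T hT0.le)
                (Eventually.of_forall fun x => (Real.exp_pos _).le)
        have hloglow : -T * (-a/2) + Real.log c ≤ Real.log (h T) := by
          calc -T * (-a/2) + Real.log c = Real.log (Real.exp (-T * (-a/2)) * c) := by
                rw [Real.log_mul (Real.exp_ne_zero _) hc.ne', Real.log_exp]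
            _ ≤ Real.log (h T) := Real.log_le_log (by positivity) hlow
        have : a < (1 / T) * (-T * (-a/2) + Real.log c) := by
          have : (1 / T) * (-T * (-a/2) + Real.log c) = a/2 + Real.log c * T⁻¹ := by
            field_simp
          rw [this]; linarith
        calc a < (1 / T) * (-T * (-a/2) + Real.log c) := this
          _ ≤ (1 / T) * Real.log (h T) :=
              mul_le_mul_of_nonneg_left hloglow (by positivity)
      · intro b hb
        filter_upwards [eventually_gt_atTop (0:ℝ)] with T hT0
        have : Real.log (h T) ≤ 0 := Real.log_nonpos (hpos T hT0.le).le (hle1 T hT0.le)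
        have h1 : (1 / T) * Real.log (h T) ≤ 0 :=
          mul_nonpos_of_nonneg_of_nonpos (by positivity) this
        linarith
    have : Tendsto (fun T => -E + (1 / T) * Real.log (h T)) atTop (nhds (-E + 0)) :=
      tendsto_const_nhds.add hlog0
    rw [add_zero] at this
    apply this.congr'
    filter_upwards [eventually_gt_atTop (0:ℝ)] with T hT0
    rw [hrel T, Real.log_mul (Real.exp_ne_zero _) (hpos T hT0.le).ne', Real.log_exp]
    field_simp
  · -- second limit restated
    apply h2.congr'
    filter_upwards [] with T
    rw [hrel T, ← mul_assoc, ← Real.exp_add]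
    ring_nf
    simp
end

section
/- Let (a_T)_{T>0} be positive reals such that T ↦ a_{2T}/a_T² is monotone increasing (equivalently a_T²/a_{2T} is decreasing), a_T = e^{-TE + o(T)} for some E ∈ ℝ, and ρ̃ := lim_{T→∞} a_T²/a_{2T} > 0. Then lim inf_{T→∞} e^{TE} a_T ≥ min(1, ρ̃) > 0. -/
open Real Filter

theorem liminf_lower_bound_from_doubling_ratio
    (a : ℝ → ℝ) (E : ℝ) (ρ : ℝ)
    (hapos : ∀ T : ℝ, 0 < T → 0 < a T)
    (hmono : ∀ S T : ℝ, 0 < S → S ≤ T → a (2 * S) / (a S) ^ 2 ≤ a (2 * T) / (a T) ^ 2)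
    (hsubexp : Tendsto (fun T : ℝ => Real.log (a T) / T) atTop (nhds (-E)))
    (hlim : Tendsto (fun T : ℝ => (a T) ^ 2 / a (2 * T)) atTop (nhds ρ))
    (hρ : 0 < ρ) :
    0 < min 1 ρ ∧
      min 1 ρ ≤ Filter.liminf (fun T : ℝ => Real.exp (T * E) * a T) atTop := by
  set c := min 1 ρ with hc
  have hcpos : 0 < c := lt_min one_pos hρ
  refine ⟨hcpos, ?_⟩
  have hcρ : c ≤ ρ := min_le_right _ _
  -- Step A: the doubling ratio is always at least ρ
  have keyA : ∀ T : ℝ, 0 < T → ρ ≤ (a T) ^ 2 / a (2 * T) := by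
    intro T hT
    refine le_of_tendsto hlim ?_
    filter_upwards [eventually_ge_atTop T] with S hS
    have hS0 : 0 < S := lt_of_lt_of_le hT hS
    have h1 := hmono T S hT hS
    have hT2 : 0 < a (2*T) := hapos _ (by linarith)
    have hS2 : 0 < a (2*S) := hapos _ (by linarith)
    have hTa : 0 < a T := hapos _ hT
    have hSa : 0 < a S := hapos _ hS0
    rw [div_le_div_iff₀ (pow_pos hTa 2) (pow_pos hSa 2)] at h1
    rw [div_le_div_iff₀ hS2 hT2]
    nlinarith
  set u : ℝ → ℝ := fun T => Real.log (a T) + T * E - Real.log c with hu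
  set d : ℝ → ℝ := fun T => Real.log ((a T)^2 / a (2*T)) - Real.log c with hd
  have hrec : ∀ T : ℝ, 0 < T → u (2*T) = 2 * u T - d T := by
    intro T hT
    have h2T : (0:ℝ) < 2*T := by linarith
    simp only [hu, hd]
    rw [Real.log_div (pow_ne_zero 2 (hapos T hT).ne') (hapos _ h2T).ne', Real.log_pow]
    push_cast
    ring
  have hdnn : ∀ T : ℝ, 0 < T → 0 ≤ d T := by
    intro T hT
    have h : Real.log c ≤ Real.log ((a T)^2 / a (2*T)) :=
      Real.log_le_log hcpos (le_trans hcρ (keyA T hT))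
    simpa [hd] using sub_nonneg.mpr h
  set L : ℝ := Real.log ρ - Real.log c with hL
  have hLnn : 0 ≤ L := sub_nonneg.mpr (Real.log_le_log hcpos hcρ)
  have hdlim : Tendsto d atTop (nhds L) := by
    have h : Tendsto (fun T => Real.log ((a T)^2 / a (2*T))) atTop (nhds (Real.log ρ)) :=
      (Real.continuousAt_log hρ.ne').tendsto.comp hlim
    simpa [hd, hL] using h.sub (tendsto_const_nhds : Tendsto (fun _ : ℝ => Real.log c) atTop _)
  obtain ⟨S₀, hS₀⟩ : ∃ S₀, ∀ S ≥ S₀, d S ≤ L + 1 := by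
    have h := hdlim.eventually (eventually_le_nhds (by linarith : L < L+1))
    exact eventually_atTop.mp h
  -- u S / S → 0
  have huo : Tendsto (fun S => u S / S) atTop (nhds 0) := by
    have h1 : Tendsto (fun S : ℝ => Real.log (a S) / S + (E - Real.log c / S)) atTop
        (nhds (-E + (E - 0))) :=
      hsubexp.add (tendsto_const_nhds.sub (tendsto_const_nhds.div_atTop tendsto_id))
    rw [show (0:ℝ) = -E + (E - 0) by ring]
    refine Tendsto.congr' ?_ h1
    filter_upwards [eventually_gt_atTop 0] with S hS
    have hS' : S ≠ 0 := hS.ne'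
    simp only [hu]
    field_simp
    ring
  have hdyadic : ∀ T : ℝ, 0 < T →
      Tendsto (fun k : ℕ => u (2^k * T) / 2^k) atTop (nhds 0) := by
    intro T hT
    have hTk : Tendsto (fun k : ℕ => (2:ℝ)^k * T) atTop atTop :=
      (tendsto_pow_atTop_atTop_of_one_lt one_lt_two).atTop_mul_const hT
    have h := (huo.comp hTk).mul_const T
    rw [zero_mul] at h
    refine Tendsto.congr ?_ h
    intro k
    have h2 : ((2:ℝ)^k) ≠ 0 := by positivity
    simp only [Function.comp]
    field_simp
  -- lower induction
  have hlow : ∀ T : ℝ, 0 < T → ∀ k : ℕ, u (2^k * T) ≤ 2^k * u T := by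
    intro T hT k
    induction k with
    | zero => simp
    | succ k ih =>
      have hk : (0:ℝ) < 2^k * T := by positivity
      have hr := hrec (2^k * T) hk
      have hdk := hdnn (2^k * T) hk
      have h2 : (2:ℝ)^(k+1) * T = 2 * (2^k * T) := by ring
      rw [h2, hr, pow_succ]
      nlinarith
  -- u T ≥ 0 for all T > 0
  have hpos : ∀ T : ℝ, 0 < T → 0 ≤ u T := by
    intro T hT
    refine le_of_tendsto (hdyadic T hT) ?_
    filter_upwards with k
    have h := hlow T hT k
    have h2 : (0:ℝ) < 2^k := by positivity
    rw [div_le_iff₀ h2]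
    linarith
  -- upper bound eventually
  have hup : ∀ T : ℝ, max S₀ 1 ≤ T → u T ≤ L + 1 := by
    intro T hT'
    have hT : 0 < T := lt_of_lt_of_le one_pos (le_trans (le_max_right _ _) hT')
    have hTS : S₀ ≤ T := le_trans (le_max_left _ _) hT'
    have claim : ∀ k : ℕ, 2^k * u T ≤ u (2^k * T) + (L+1) * (2^k - 1) := by
      intro k
      induction k with
      | zero => simp
      | succ k ih =>
        have hk : (0:ℝ) < 2^k * T := by positivity
        have hr := hrec (2^k * T) hk
        have hge : S₀ ≤ 2^k * T := by
          have h1 : (1:ℝ) ≤ 2^k := one_le_pow₀ (by norm_num : (1:ℝ) ≤ 2)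
          nlinarith
        have hdk := hS₀ _ hge
        have h2 : (2:ℝ)^(k+1) * T = 2 * (2^k * T) := by ring
        rw [h2, hr]
        rw [pow_succ] at *
        nlinarith
    have hlim2 : Tendsto (fun k : ℕ => u (2^k * T) / 2^k + (L+1)) atTop (nhds (L+1)) := by
      simpa using (hdyadic T hT).add_const (L+1)
    refine ge_of_tendsto hlim2 ?_
    filter_upwards with k
    have h := claim k
    have h2 : (0:ℝ) < 2^k := by positivity
    rw [← sub_le_iff_le_add, le_div_iff₀ h2]
    nlinarith [hLnn]
  -- conclusion
  have hexp : ∀ T : ℝ, 0 < T → Real.exp (T*E) * a T = Real.exp (u T + Real.log c) := by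
    intro T hT
    rw [show u T + Real.log c = T*E + Real.log (a T) by simp only [hu]; ring,
      Real.exp_add, Real.exp_log (hapos T hT)]
  have hbound : IsBoundedUnder (· ≤ ·) atTop (fun T => Real.exp (T*E) * a T) := by
    refine ⟨Real.exp (L + 1 + Real.log c), ?_⟩
    rw [eventually_map]
    filter_upwards [eventually_ge_atTop (max S₀ 1)] with T hT
    have hT0 : 0 < T := lt_of_lt_of_le one_pos (le_trans (le_max_right _ _) hT)
    rw [hexp T hT0]
    exact Real.exp_le_exp.mpr (by linarith [hup T hT])
  refine le_liminf_of_le hbound.isCoboundedUnder_ge ?_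
  filter_upwards [eventually_ge_atTop 1] with T hT
  have hT0 : 0 < T := lt_of_lt_of_le one_pos hT
  rw [hexp T hT0]
  calc c = Real.exp (Real.log c) := (Real.exp_log hcpos).symm
  _ ≤ _ := Real.exp_le_exp.mpr (by linarith [hpos T hT0])
end

section
/- Let g : ℝ → [0,∞) be bounded and continuous, α > 0, T > 0, and for N ∈ ℕ let Λ(T,N) = {kT/N : 0 ≤ k ≤ N}, δ = T/N. For each interval I = (a,b] ⊆ [0,T]² the sum S_N = ∑_{i,j ∈ Λ(T,N) ∩ I, i<j, |i−j|≠δ} (1 − e^{−2αδ² g(j−i)}) converges to 2α ∫_I g(t−s) 1_{s<t} ds dt as N → ∞, and max over pairs of the summand tends to 0. -/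
open MeasureTheory Real Filter Topology

private lemma dbsc_le_phi {δ : ℝ} (hδ : 0 < δ) (x : ℝ) : x ≤ δ * ⌈x / δ⌉ := by
  have h := Int.le_ceil (x / δ)
  calc x = δ * (x / δ) := by field_simp
  _ ≤ δ * ⌈x / δ⌉ := by exact mul_le_mul_of_nonneg_left h hδ.le

private lemma dbsc_phi_lt {δ : ℝ} (hδ : 0 < δ) (x : ℝ) : δ * ⌈x / δ⌉ < x + δ := by
  have h := Int.ceil_lt_add_one (x / δ)
  calc δ * (⌈x / δ⌉ : ℝ) < δ * (x / δ + 1) := by exact mul_lt_mul_of_pos_left h hδ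
  _ = x + δ := by field_simp

private lemma dbsc_mem_cell_iff {δ : ℝ} (hδ : 0 < δ) (k : ℤ) (x : ℝ) :
    x ∈ Set.Ioc ((k : ℝ) * δ - δ) ((k : ℝ) * δ) ↔ ⌈x / δ⌉ = k := by
  rw [Set.mem_Ioc, Int.ceil_eq_iff]
  constructor
  · rintro ⟨h1, h2⟩
    refine ⟨by rw [lt_div_iff₀ hδ]; nlinarith, by rw [div_le_iff₀ hδ]; nlinarith⟩
  · rintro ⟨h1, h2⟩
    rw [lt_div_iff₀ hδ] at h1
    rw [div_le_iff₀ hδ] at h2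
    constructor <;> nlinarith

private lemma dbsc_mem_cell_iff_nat {δ : ℝ} (hδ : 0 < δ) (k : ℕ) (x : ℝ) :
    x ∈ Set.Ioc ((k : ℝ) * δ - δ) ((k : ℝ) * δ) ↔ ⌈x / δ⌉ = (k : ℤ) := by
  have := dbsc_mem_cell_iff hδ (k : ℤ) x
  rwa [Int.cast_natCast] at this

private lemma dbsc_fst_line_null (c : ℝ) : (MeasureTheory.volume {p : ℝ × ℝ | p.1 = c}) = 0 := by
  have : {p : ℝ × ℝ | p.1 = c} = ({c} : Set ℝ) ×ˢ (Set.univ : Set ℝ) := by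
    ext p
    constructor
    · intro h; exact ⟨h, trivial⟩
    · intro h; exact h.1
  rw [this, MeasureTheory.Measure.volume_eq_prod, MeasureTheory.Measure.prod_prod]
  simp

private lemma dbsc_snd_line_null (c : ℝ) : (MeasureTheory.volume {p : ℝ × ℝ | p.2 = c}) = 0 := by
  have : {p : ℝ × ℝ | p.2 = c} = (Set.univ : Set ℝ) ×ˢ ({c} : Set ℝ) := by
    ext p
    constructor
    · intro h; exact ⟨trivial, h⟩
    · intro h; exact h.2
  rw [this, MeasureTheory.Measure.volume_eq_prod, MeasureTheory.Measure.prod_prod]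
  simp

private lemma dbsc_diag_null : (MeasureTheory.volume {p : ℝ × ℝ | p.1 = p.2}) = 0 := by
  have hm : MeasurableSet {p : ℝ × ℝ | p.1 = p.2} :=
    measurableSet_eq_fun measurable_fst measurable_snd
  rw [MeasureTheory.Measure.volume_eq_prod, MeasureTheory.Measure.prod_apply hm]
  have h : ∀ x : ℝ, (MeasureTheory.volume (Prod.mk x ⁻¹' {p : ℝ × ℝ | p.1 = p.2})) = 0 := by
    intro x
    have : Prod.mk x ⁻¹' {p : ℝ × ℝ | p.1 = p.2} = {x} := by ext y; simp [eq_comm]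
    rw [this]; simp
  simp [h]

set_option maxHeartbeats 2000000 in
/-- Riemann-sum convergence of discrete long-range percolation bond probabilities to the
intensity of the continuum Poisson bond process. -/
theorem discrete_bond_sum_convergence
    (g : ℝ → ℝ) (hgcont : Continuous g) (hgbdd : ∃ M : ℝ, ∀ t, |g t| ≤ M)
    (hgnonneg : ∀ t, 0 ≤ g t)
    (α T : ℝ) (hα : 0 < α) (hT : 0 < T)
    (a b : ℝ × ℝ)
    (hI : Set.Ioc a.1 b.1 ×ˢ Set.Ioc a.2 b.2 ⊆ Set.Icc (0 : ℝ) T ×ˢ Set.Icc (0 : ℝ) T) :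
    Tendsto (fun N : ℕ =>
        ∑ k ∈ Finset.range (N + 1), ∑ l ∈ Finset.range (N + 1),
          if ((k : ℝ) * T / N, (l : ℝ) * T / N) ∈ Set.Ioc a.1 b.1 ×ˢ Set.Ioc a.2 b.2 ∧
              (k : ℝ) * T / N < (l : ℝ) * T / N ∧
              (l : ℝ) * T / N - (k : ℝ) * T / N ≠ T / N
          then 1 - Real.exp (-(2 * α * (T / N) ^ 2 * g ((l : ℝ) * T / N - (k : ℝ) * T / N)))
          else 0)
      atTop
      (nhds (2 * α * ∫ p in Set.Ioc a.1 b.1 ×ˢ Set.Ioc a.2 b.2,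
        Set.indicator {q : ℝ × ℝ | q.1 < q.2} (fun q => g (q.2 - q.1)) p)) ∧
    Tendsto (fun N : ℕ =>
        ⨆ k : Fin (N + 1), ⨆ l : Fin (N + 1),
          (1 - Real.exp (-(2 * α * (T / N) ^ 2 * g ((l : ℝ) * T / N - (k : ℝ) * T / N)))))
      atTop (nhds 0) := by
  obtain ⟨M, hM⟩ := hgbdd
  refine ⟨?_, ?_⟩
  ·
    have hM0 : 0 ≤ M := le_trans (abs_nonneg _) (hM 0)
    set I2 : Set (ℝ × ℝ) := Set.Ioc a.1 b.1 ×ˢ Set.Ioc a.2 b.2 with hI2def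
    set SS : ℕ → ℝ := fun N : ℕ =>
        ∑ k ∈ Finset.range (N + 1), ∑ l ∈ Finset.range (N + 1),
          if ((k : ℝ) * T / N, (l : ℝ) * T / N) ∈ I2 ∧
              (k : ℝ) * T / N < (l : ℝ) * T / N ∧
              (l : ℝ) * T / N - (k : ℝ) * T / N ≠ T / N
          then 1 - Real.exp (-(2 * α * (T / N) ^ 2 * g ((l : ℝ) * T / N - (k : ℝ) * T / N)))
          else 0
      with hSSdef
    set δ : ℕ → ℝ := fun N => T / N with hδdef
    have hδpos : ∀ N : ℕ, 1 ≤ N → 0 < δ N := by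
      intro N hN
      have : (0:ℝ) < N := by exact_mod_cast hN
      exact div_pos hT this
    have hδ0 : Tendsto δ atTop (𝓝 0) := tendsto_const_div_atTop_nhds_zero_nat T
    have hδT : ∀ N : ℕ, 1 ≤ N → δ N ≤ T := by
      intro N hN
      have h1 : (1:ℝ) ≤ N := by exact_mod_cast hN
      rw [hδdef]
      rw [div_le_iff₀ (by linarith)]
      nlinarith
    set F : ℝ → ℝ → ℝ := fun s t => if ((s, t) ∈ I2 ∧ s < t) then g (t - s) else 0 with hFdef
    have hFbd : ∀ s t, |F s t| ≤ M := by
      intro s t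
      simp only [hFdef]
      split
      · exact hM _
      · simpa using hM0
    have hFzero : ∀ s t, F s t ≠ 0 → (s, t) ∈ I2 ∧ s < t := by
      intro s t h
      by_contra hc
      exact h (if_neg hc)
    set G : ℕ → ℝ := fun N => ∑ k ∈ Finset.range (N+1), ∑ l ∈ Finset.range (N+1),
        F ((k:ℝ) * δ N) ((l:ℝ) * δ N) * (δ N)^2 with hGdef
    set C : ℕ → ℕ → ℕ → Set (ℝ × ℝ) := fun N k l =>
        Set.Ioc ((k:ℝ) * δ N - δ N) ((k:ℝ) * δ N) ×ˢ Set.Ioc ((l:ℝ) * δ N - δ N) ((l:ℝ) * δ N)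
        with hCdef
    have hCmeas : ∀ N k l, MeasurableSet (C N k l) := fun _ _ _ =>
      measurableSet_Ioc.prod measurableSet_Ioc
    have hCvol : ∀ N, 1 ≤ N → ∀ k l, MeasureTheory.volume (C N k l)
        = ENNReal.ofReal (δ N) * ENNReal.ofReal (δ N) := by
      intro N hN k l
      rw [hCdef]
      rw [MeasureTheory.Measure.volume_eq_prod, MeasureTheory.Measure.prod_prod,
        Real.volume_Ioc, Real.volume_Ioc]
      congr 1 <;> congr 1 <;> ring
    set FN : ℕ → ℝ × ℝ → ℝ := fun N p => ∑ k ∈ Finset.range (N+1), ∑ l ∈ Finset.range (N+1),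
        Set.indicator (C N k l) (fun _ => F ((k:ℝ) * δ N) ((l:ℝ) * δ N)) p with hFNdef
    have hii : ∀ N, 1 ≤ N → ∀ k l : ℕ,
        MeasureTheory.Integrable (Set.indicator (C N k l) (fun _ => F ((k:ℝ) * δ N) ((l:ℝ) * δ N)))
          MeasureTheory.volume := by
      intro N hN k l
      rw [MeasureTheory.integrable_indicator_iff (hCmeas N k l)]
      refine MeasureTheory.integrableOn_const (ne_of_lt ?_) (by simp)
      rw [hCvol N hN k l]
      exact ENNReal.mul_lt_top ENNReal.ofReal_lt_top ENNReal.ofReal_lt_top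
    have hInt : ∀ N, 1 ≤ N → (∫ p : ℝ × ℝ, FN N p) = G N := by
      intro N hN
      simp only [hFNdef, hGdef]
      rw [MeasureTheory.integral_finset_sum _
        (fun k _ => MeasureTheory.integrable_finset_sum _ (fun l _ => hii N hN k l))]
      refine Finset.sum_congr rfl fun k _ => ?_
      rw [MeasureTheory.integral_finset_sum _ (fun l _ => hii N hN k l)]
      refine Finset.sum_congr rfl fun l _ => ?_
      rw [MeasureTheory.integral_indicator_const _ (hCmeas N k l), MeasureTheory.measureReal_def, hCvol N hN k l]
      rw [ENNReal.toReal_mul, ENNReal.toReal_ofReal (hδpos N hN).le]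
      rw [smul_eq_mul]
      ring
    have heval : ∀ N, 1 ≤ N → ∀ p : ℝ × ℝ,
        (FN N p = 0 ∧ ∀ k l : ℕ, k ≤ N → l ≤ N → p ∉ C N k l) ∨
        ∃ k l : ℕ, k ≤ N ∧ l ≤ N ∧ p ∈ C N k l ∧ FN N p = F ((k:ℝ) * δ N) ((l:ℝ) * δ N) := by
      intro N hN p
      by_cases hex : ∃ k l : ℕ, k ≤ N ∧ l ≤ N ∧ p ∈ C N k l
      · obtain ⟨k, l, hk, hl, hmem⟩ := hex
        right
        refine ⟨k, l, hk, hl, hmem, ?_⟩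
        have hp1 : ⌈p.1 / δ N⌉ = (k:ℤ) :=
          (dbsc_mem_cell_iff_nat (hδpos N hN) k p.1).1 (Set.mem_prod.1 hmem).1
        have hp2 : ⌈p.2 / δ N⌉ = (l:ℤ) :=
          (dbsc_mem_cell_iff_nat (hδpos N hN) l p.2).1 (Set.mem_prod.1 hmem).2
        simp only [hFNdef]
        rw [Finset.sum_eq_single_of_mem k (Finset.mem_range.2 (by omega))]
        · rw [Finset.sum_eq_single_of_mem l (Finset.mem_range.2 (by omega))]
          · exact Set.indicator_of_mem hmem _
          · intro l' _ hll'
            refine Set.indicator_of_notMem (fun hmem' => ?_) _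
            have := (dbsc_mem_cell_iff_nat (hδpos N hN) l' p.2).1 (Set.mem_prod.1 hmem').2
            rw [hp2] at this
            exact hll' (by exact_mod_cast this.symm)
        · intro k' _ hkk'
          refine Finset.sum_eq_zero fun l' _ => Set.indicator_of_notMem (fun hmem' => ?_) _
          have := (dbsc_mem_cell_iff_nat (hδpos N hN) k' p.1).1 (Set.mem_prod.1 hmem').1
          rw [hp1] at this
          exact hkk' (by exact_mod_cast this.symm)
      · left
        push_neg at hex
        constructor
        · simp only [hFNdef]
          exact Finset.sum_eq_zero fun k hk => Finset.sum_eq_zero fun l hl =>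
            Set.indicator_of_notMem
              (hex k l (Finset.mem_range_succ_iff.1 hk) (Finset.mem_range_succ_iff.1 hl)) _
        · exact hex
    have hmeas : ∀ N : ℕ, MeasureTheory.AEStronglyMeasurable (FN N) MeasureTheory.volume := by
      intro N
      refine Measurable.aestronglyMeasurable ?_
      simp only [hFNdef]
      refine Finset.measurable_sum _ fun k _ => Finset.measurable_sum _ fun l _ => ?_
      exact measurable_const.indicator (hCmeas N k l)
    set bnd : ℝ × ℝ → ℝ := Set.indicator (Set.Ioc (-T) T ×ˢ Set.Ioc (-T) T) (fun _ => M)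
      with hbnddef
    have hbnd_nonneg : ∀ p, 0 ≤ bnd p := fun p => Set.indicator_nonneg (fun _ _ => hM0) p
    have hbnd_int : MeasureTheory.Integrable bnd MeasureTheory.volume := by
      rw [hbnddef, MeasureTheory.integrable_indicator_iff (measurableSet_Ioc.prod measurableSet_Ioc)]
      refine MeasureTheory.integrableOn_const (ne_of_lt ?_) (by simp)
      rw [MeasureTheory.Measure.volume_eq_prod, MeasureTheory.Measure.prod_prod, Real.volume_Ioc]
      exact ENNReal.mul_lt_top ENNReal.ofReal_lt_top ENNReal.ofReal_lt_top
    have hbound : ∀ N, 1 ≤ N → ∀ p : ℝ × ℝ, ‖FN N p‖ ≤ bnd p := by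
      intro N hN p
      rw [Real.norm_eq_abs]
      rcases heval N hN p with ⟨h0, -⟩ | ⟨k, l, hk, hl, hmem, hval⟩
      · rw [h0]; simpa using hbnd_nonneg p
      · rw [hval]
        by_cases hFz : F ((k:ℝ) * δ N) ((l:ℝ) * δ N) = 0
        · rw [hFz]; simpa using hbnd_nonneg p
        · have hmemI := (hFzero _ _ hFz).1
          have hIcc := hI hmemI
          have h1 : ((k:ℝ) * δ N) ∈ Set.Icc (0:ℝ) T := (Set.mem_prod.1 hIcc).1
          have h2 : ((l:ℝ) * δ N) ∈ Set.Icc (0:ℝ) T := (Set.mem_prod.1 hIcc).2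
          have hm1 := (Set.mem_prod.1 hmem).1
          have hm2 := (Set.mem_prod.1 hmem).2
          have hδT' := hδT N hN
          have hp1 : p.1 ∈ Set.Ioc (-T) T := by
            rw [Set.mem_Ioc] at *
            exact ⟨by linarith [hm1.1, h1.1], by linarith [hm1.2, h1.2]⟩
          have hp2 : p.2 ∈ Set.Ioc (-T) T := by
            rw [Set.mem_Ioc] at *
            exact ⟨by linarith [hm2.1, h2.1], by linarith [hm2.2, h2.2]⟩
          rw [hbnddef, Set.indicator_of_mem (Set.mem_prod.2 ⟨hp1, hp2⟩)]
          exact hFbd _ _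
    have hphi : ∀ x : ℝ, Tendsto (fun N => δ N * ⌈x / δ N⌉) atTop (𝓝 x) := by
      intro x
      have hup : Tendsto (fun N : ℕ => x + δ N) atTop (𝓝 x) := by
        simpa using tendsto_const_nhds.add hδ0
      refine tendsto_of_tendsto_of_tendsto_of_le_of_le' tendsto_const_nhds hup ?_ ?_
      · filter_upwards [eventually_ge_atTop 1] with N hN
        exact dbsc_le_phi (hδpos N hN) x
      · filter_upwards [eventually_ge_atTop 1] with N hN
        exact (dbsc_phi_lt (hδpos N hN) x).le
    have hstab : ∀ (c d x : ℝ), x ≠ c → x ≠ d →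
        ∀ᶠ y in 𝓝 x, (y ∈ Set.Ioc c d ↔ x ∈ Set.Ioc c d) := by
      intro c d x hxc hxd
      by_cases hx : x ∈ Set.Ioc c d
      · have hx' : x ∈ Set.Ioo c d := ⟨hx.1, lt_of_le_of_ne hx.2 hxd⟩
        filter_upwards [isOpen_Ioo.mem_nhds hx'] with y hy
        exact iff_of_true ⟨hy.1, hy.2.le⟩ hx
      · have hx0 := hx
        rw [Set.mem_Ioc, not_and_or, not_lt, not_le] at hx
        rcases hx with h | h
        · have hx' : x < c := lt_of_le_of_ne h hxc
          filter_upwards [Iio_mem_nhds hx'] with y hy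
          exact iff_of_false (fun hm => absurd hm.1 (not_lt.2 hy.le)) hx0
        · filter_upwards [Ioi_mem_nhds h] with y hy
          exact iff_of_false (fun hm => absurd hm.2 (not_le.2 hy)) hx0
    have hae : ∀ᵐ p : ℝ × ℝ, Tendsto (fun N => FN N p) atTop (𝓝 (F p.1 p.2)) := by
      have h1 : ∀ᵐ p : ℝ × ℝ, p.1 ≠ a.1 := by
        rw [MeasureTheory.ae_iff]; simp only [ne_eq, not_not]; exact dbsc_fst_line_null a.1
      have h2 : ∀ᵐ p : ℝ × ℝ, p.1 ≠ b.1 := by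
        rw [MeasureTheory.ae_iff]; simp only [ne_eq, not_not]; exact dbsc_fst_line_null b.1
      have h3 : ∀ᵐ p : ℝ × ℝ, p.2 ≠ a.2 := by
        rw [MeasureTheory.ae_iff]; simp only [ne_eq, not_not]; exact dbsc_snd_line_null a.2
      have h4 : ∀ᵐ p : ℝ × ℝ, p.2 ≠ b.2 := by
        rw [MeasureTheory.ae_iff]; simp only [ne_eq, not_not]; exact dbsc_snd_line_null b.2
      have h5 : ∀ᵐ p : ℝ × ℝ, p.1 ≠ p.2 := by
        rw [MeasureTheory.ae_iff]; simp only [ne_eq, not_not]; exact dbsc_diag_null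
      filter_upwards [h1, h2, h3, h4, h5] with p ha1 hb1 ha2 hb2 h12
      set φ1 : ℕ → ℝ := fun N => δ N * ⌈p.1 / δ N⌉ with hφ1def
      set φ2 : ℕ → ℝ := fun N => δ N * ⌈p.2 / δ N⌉ with hφ2def
      have hcell_eq : ∀ N, 1 ≤ N → ∀ k l : ℕ, p ∈ C N k l →
          ((k:ℝ) * δ N = φ1 N ∧ (l:ℝ) * δ N = φ2 N) := by
        intro N hN k l hmem
        have h1 := (dbsc_mem_cell_iff_nat (hδpos N hN) k p.1).1 (Set.mem_prod.1 hmem).1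
        have h2 := (dbsc_mem_cell_iff_nat (hδpos N hN) l p.2).1 (Set.mem_prod.1 hmem).2
        constructor
        · simp only [hφ1def]; rw [h1]; push_cast; ring
        · simp only [hφ2def]; rw [h2]; push_cast; ring
      have hφ1t : Tendsto φ1 atTop (𝓝 p.1) := hphi p.1
      have hφ2t : Tendsto φ2 atTop (𝓝 p.2) := hphi p.2
      by_cases hbox : 0 ≤ p.1 ∧ p.1 ≤ T ∧ 0 ≤ p.2 ∧ p.2 ≤ T
      · have hcongr : ∀ᶠ q : ℝ × ℝ in 𝓝 p,
            (((q.1, q.2) ∈ I2 ∧ q.1 < q.2) ↔ ((p.1, p.2) ∈ I2 ∧ p.1 < p.2)) := by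
          have e1 := Filter.Tendsto.eventually (continuousAt_fst : ContinuousAt Prod.fst p)
            (hstab a.1 b.1 p.1 ha1 hb1)
          have e2 := Filter.Tendsto.eventually (continuousAt_snd : ContinuousAt Prod.snd p)
            (hstab a.2 b.2 p.2 ha2 hb2)
          have e3 : ∀ᶠ q : ℝ × ℝ in 𝓝 p, (q.1 < q.2 ↔ p.1 < p.2) := by
            by_cases h : p.1 < p.2
            · filter_upwards [(isOpen_lt continuous_fst continuous_snd).mem_nhds h] with q hq
              exact iff_of_true hq h
            · have h' : p.2 < p.1 := lt_of_le_of_ne (not_lt.1 h) (Ne.symm h12)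
              filter_upwards [(isOpen_lt continuous_snd continuous_fst).mem_nhds h'] with q hq
              exact iff_of_false (asymm hq) h
          filter_upwards [e1, e2, e3] with q hq1 hq2 hq3
          simp only [hI2def, Set.mem_prod]
          constructor
          · rintro ⟨⟨m1, m2⟩, m3⟩
            exact ⟨⟨hq1.1 m1, hq2.1 m2⟩, hq3.1 m3⟩
          · rintro ⟨⟨m1, m2⟩, m3⟩
            exact ⟨⟨hq1.2 m1, hq2.2 m2⟩, hq3.2 m3⟩
        have hFcont : ContinuousAt (fun q : ℝ × ℝ => F q.1 q.2) p := by
          by_cases hc : (p.1, p.2) ∈ I2 ∧ p.1 < p.2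
          · have heq : (fun q : ℝ × ℝ => g (q.2 - q.1)) =ᶠ[𝓝 p] fun q : ℝ × ℝ => F q.1 q.2 := by
              filter_upwards [hcongr] with q hq
              simp only [hFdef]
              rw [if_pos (hq.2 hc)]
            exact ContinuousAt.congr
              ((hgcont.comp (continuous_snd.sub continuous_fst)).continuousAt) heq
          · have heq : (fun _ : ℝ × ℝ => (0:ℝ)) =ᶠ[𝓝 p] fun q : ℝ × ℝ => F q.1 q.2 := by
              filter_upwards [hcongr] with q hq
              simp only [hFdef]
              rw [if_neg (fun hcon => hc (hq.1 hcon))]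
            exact ContinuousAt.congr continuousAt_const heq
        have hev : ∀ᶠ N in atTop, FN N p = F (φ1 N) (φ2 N) := by
          filter_upwards [eventually_ge_atTop 1] with N hN
          have hδp := hδpos N hN
          have hNδ : (N:ℝ) * δ N = T := by
            rw [hδdef]
            field_simp
          have hk0n : (0:ℤ) ≤ ⌈p.1 / δ N⌉ := Int.ceil_nonneg (div_nonneg hbox.1 hδp.le)
          have hk0N : ⌈p.1 / δ N⌉ ≤ (N:ℤ) := by
            rw [Int.ceil_le]; push_cast; rw [div_le_iff₀ hδp]; linarith [hbox.2.1]
          have hl0n : (0:ℤ) ≤ ⌈p.2 / δ N⌉ := Int.ceil_nonneg (div_nonneg hbox.2.2.1 hδp.le)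
          have hl0N : ⌈p.2 / δ N⌉ ≤ (N:ℤ) := by
            rw [Int.ceil_le]; push_cast; rw [div_le_iff₀ hδp]; linarith [hbox.2.2.2]
          have hk0c : ((⌈p.1 / δ N⌉.toNat : ℕ) : ℤ) = ⌈p.1 / δ N⌉ := Int.toNat_of_nonneg hk0n
          have hl0c : ((⌈p.2 / δ N⌉.toNat : ℕ) : ℤ) = ⌈p.2 / δ N⌉ := Int.toNat_of_nonneg hl0n
          have hmem : p ∈ C N ⌈p.1 / δ N⌉.toNat ⌈p.2 / δ N⌉.toNat := by
            refine Set.mem_prod.2 ⟨?_, ?_⟩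
            · exact (dbsc_mem_cell_iff_nat hδp _ p.1).2 hk0c.symm
            · exact (dbsc_mem_cell_iff_nat hδp _ p.2).2 hl0c.symm
          rcases heval N hN p with ⟨-, hno⟩ | ⟨k, l, hk, hl, hmem', hval⟩
          · exact absurd hmem (hno _ _ (by omega) (by omega))
          · rw [hval, (hcell_eq N hN k l hmem').1, (hcell_eq N hN k l hmem').2]
        refine Tendsto.congr' (Filter.EventuallyEq.symm hev) ?_
        have hpt : Tendsto (fun N => (φ1 N, φ2 N)) atTop (𝓝 p) := by
          have := hφ1t.prodMk_nhds hφ2t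
          simpa using this
        exact hFcont.tendsto.comp hpt
      · have hout : p.1 < 0 ∨ T < p.1 ∨ p.2 < 0 ∨ T < p.2 := by
          by_contra hcon
          push_neg at hcon
          exact hbox ⟨hcon.1, hcon.2.1, hcon.2.2.1, hcon.2.2.2⟩
        have hFp : F p.1 p.2 = 0 := by
          by_contra h
          have hIcc := hI (hFzero _ _ h).1
          have h1 : p.1 ∈ Set.Icc (0:ℝ) T := (Set.mem_prod.1 hIcc).1
          have h2 : p.2 ∈ Set.Icc (0:ℝ) T := (Set.mem_prod.1 hIcc).2
          rcases hout with h' | h' | h' | h'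
          · exact absurd h1.1 (not_le.2 h')
          · exact absurd h1.2 (not_le.2 h')
          · exact absurd h2.1 (not_le.2 h')
          · exact absurd h2.2 (not_le.2 h')
        rw [hFp]
        have hφF : ∀ᶠ N in atTop, F (φ1 N) (φ2 N) = 0 := by
          rcases hout with h' | h' | h' | h'
          · filter_upwards [hφ1t.eventually_lt_const h'] with N hN
            by_contra hne
            have h1 : (φ1 N) ∈ Set.Icc (0:ℝ) T := (Set.mem_prod.1 (hI (hFzero _ _ hne).1)).1
            linarith [h1.1]
          · filter_upwards [eventually_ge_atTop 1] with N hN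
            by_contra hne
            have h1 : (φ1 N) ∈ Set.Icc (0:ℝ) T := (Set.mem_prod.1 (hI (hFzero _ _ hne).1)).1
            have h3 : p.1 ≤ φ1 N := dbsc_le_phi (hδpos N hN) p.1
            linarith [h1.2]
          · filter_upwards [hφ2t.eventually_lt_const h'] with N hN
            by_contra hne
            have h2 : (φ2 N) ∈ Set.Icc (0:ℝ) T := (Set.mem_prod.1 (hI (hFzero _ _ hne).1)).2
            linarith [h2.1]
          · filter_upwards [eventually_ge_atTop 1] with N hN
            by_contra hne
            have h2 : (φ2 N) ∈ Set.Icc (0:ℝ) T := (Set.mem_prod.1 (hI (hFzero _ _ hne).1)).2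
            have h3 : p.2 ≤ φ2 N := dbsc_le_phi (hδpos N hN) p.2
            linarith [h2.2]
        have hev0 : ∀ᶠ N in atTop, FN N p = 0 := by
          filter_upwards [eventually_ge_atTop 1, hφF] with N hN h0
          rcases heval N hN p with ⟨h, -⟩ | ⟨k, l, hk, hl, hmem, hval⟩
          · exact h
          · rw [hval, (hcell_eq N hN k l hmem).1, (hcell_eq N hN k l hmem).2]
            exact h0
        exact Tendsto.congr' (Filter.EventuallyEq.symm hev0) tendsto_const_nhds
    have hDCT : Tendsto (fun N => ∫ p : ℝ × ℝ, FN N p) atTop (𝓝 (∫ p : ℝ × ℝ, F p.1 p.2)) := by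
      refine MeasureTheory.tendsto_integral_filter_of_dominated_convergence bnd
        (Filter.Eventually.of_forall hmeas) ?_ hbnd_int hae
      filter_upwards [eventually_ge_atTop 1] with N hN
      exact Filter.Eventually.of_forall (hbound N hN)
    have hB : Tendsto G atTop (𝓝 (∫ p : ℝ × ℝ, F p.1 p.2)) := by
      refine Tendsto.congr' ?_ hDCT
      filter_upwards [eventually_ge_atTop 1] with N hN
      exact hInt N hN
    have hLF : (∫ p : ℝ × ℝ, F p.1 p.2) = ∫ p in I2,
        Set.indicator {q : ℝ × ℝ | q.1 < q.2} (fun q => g (q.2 - q.1)) p := by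
      have hI2meas : MeasurableSet I2 := by
        rw [hI2def]; exact measurableSet_Ioc.prod measurableSet_Ioc
      have hFeq : (fun p : ℝ × ℝ => F p.1 p.2)
          = Set.indicator I2 (Set.indicator {q : ℝ × ℝ | q.1 < q.2} (fun q => g (q.2 - q.1))) := by
        funext q
        simp only [hFdef, Set.indicator_apply, Set.mem_setOf_eq, Prod.mk.eta]
        by_cases h1 : q ∈ I2 <;> by_cases h2 : q.1 < q.2 <;> simp [h1, h2]
      rw [hFeq, MeasureTheory.integral_indicator hI2meas]
    have hGlim : Tendsto (fun N => 2 * α * G N) atTop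
        (𝓝 (2 * α * ∫ p in I2,
          Set.indicator {q : ℝ × ℝ | q.1 < q.2} (fun q => g (q.2 - q.1)) p)) := by
      rw [← hLF]
      exact hB.const_mul _
    set A : ℝ := 2 * α * M * T ^ 2 with hAdef
    have hA0 : 0 ≤ A := by
      rw [hAdef]
      exact mul_nonneg (mul_nonneg (by linarith) hM0) (sq_nonneg T)
    have hsmall : ∀ᶠ N in atTop, 2 * α * M * (δ N) ^ 2 ≤ 1 := by
      have h : Tendsto (fun N => 2 * α * M * (δ N) ^ 2) atTop (𝓝 0) := by
        have h2 := (hδ0.pow 2).const_mul (2 * α * M)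
        simpa using h2
      exact h.eventually_le_const one_pos
    have herr : Tendsto (fun N => SS N - 2 * α * G N) atTop (𝓝 0) := by
      refine squeeze_zero_norm' ?_ (tendsto_const_div_atTop_nhds_zero_nat (4 * A ^ 2 + 2 * A))
      filter_upwards [eventually_ge_atTop 1, hsmall] with N hN hsm
      have hδp := hδpos N hN
      have hδeq' : δ N = T / (N:ℝ) := by simp only [hδdef]
      have hc2 : (0:ℝ) ≤ 2 * α * M * (T / (N:ℝ)) ^ 2 :=
        mul_nonneg (mul_nonneg (by linarith) hM0) (sq_nonneg _)
      have hc2le1 : 2 * α * M * (T / (N:ℝ)) ^ 2 ≤ 1 := by rw [← hδeq']; exact hsm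
      have hterm : ∀ k l : ℕ,
          |(if ((k : ℝ) * (T / N), (l : ℝ) * (T / N)) ∈ I2 ∧
                (k : ℝ) * (T / N) < (l : ℝ) * (T / N) ∧
                (l : ℝ) * (T / N) - (k : ℝ) * (T / N) ≠ T / N
            then 1 - Real.exp (-(2 * α * (T / N) ^ 2 * g ((l : ℝ) * (T / N) - (k : ℝ) * (T / N))))
            else 0) -
            2 * α * (F ((k : ℝ) * δ N) ((l : ℝ) * δ N) * δ N ^ 2)|
          ≤ (2 * α * M * (T / (N:ℝ)) ^ 2) ^ 2 + (if l = k + 1 then 2 * α * M * (T / (N:ℝ)) ^ 2 else 0) := by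
        intro k l
        rw [hδeq']
        have hite : (0:ℝ) ≤ (if l = k + 1 then 2 * α * M * (T / (N:ℝ)) ^ 2 else 0) := by
          split
          · exact hc2
          · exact le_rfl
        set x : ℝ := 2 * α * (T / N) ^ 2 * g ((l : ℝ) * (T / N) - (k : ℝ) * (T / N)) with hxdef
        have hgnn := hgnonneg ((l : ℝ) * (T / N) - (k : ℝ) * (T / N))
        have hx0 : 0 ≤ x := by rw [hxdef]; positivity
        have hxle : x ≤ 2 * α * M * (T / (N:ℝ)) ^ 2 := by
          rw [hxdef]
          have h1 : g ((l : ℝ) * (T / N) - (k : ℝ) * (T / N)) ≤ M :=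
            le_trans (le_abs_self _) (hM _)
          have h2 : (0:ℝ) ≤ 2 * α * (T / (N:ℝ)) ^ 2 := by positivity
          have h3 := mul_le_mul_of_nonneg_left h1 h2
          nlinarith [h3]
        by_cases hmemc : ((k : ℝ) * (T / N), (l : ℝ) * (T / N)) ∈ I2 ∧
            (k : ℝ) * (T / N) < (l : ℝ) * (T / N)
        · by_cases heq : (l : ℝ) * (T / N) - (k : ℝ) * (T / N) = T / N
          · have hlk : l = k + 1 := by
              have hTN : T / (N:ℝ) ≠ 0 := hδeq' ▸ hδp.ne'
              have hz : ((l:ℝ) - (k:ℝ) - 1) * (T / (N:ℝ)) = 0 := by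
                linear_combination heq
              rcases mul_eq_zero.1 hz with h | h
              · have : (l:ℝ) = (k:ℝ) + 1 := by linarith
                exact_mod_cast this
              · exact absurd h hTN
            rw [if_neg (by rintro ⟨-, -, hc⟩; exact hc heq), if_pos hlk]
            simp only [hFdef]
            rw [if_pos hmemc]
            rw [zero_sub, abs_neg]
            have hxeq : 2 * α * (g ((l : ℝ) * (T / N) - (k : ℝ) * (T / N)) * (T / (N:ℝ)) ^ 2)
                = x := by rw [hxdef]; ring
            rw [hxeq, abs_of_nonneg hx0]
            linarith [hxle, sq_nonneg (2 * α * M * (T / (N:ℝ)) ^ 2)]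
          · rw [if_pos ⟨hmemc.1, hmemc.2, heq⟩]
            simp only [hFdef]
            rw [if_pos hmemc]
            have h1 : 1 - Real.exp (-x) -
                2 * α * (g ((l : ℝ) * (T / N) - (k : ℝ) * (T / N)) * (T / (N:ℝ)) ^ 2)
                = -(Real.exp (-x) - 1 - (-x)) := by rw [hxdef]; ring
            rw [h1, abs_neg]
            have h2 : |(-x)| ≤ 1 := by
              rw [abs_neg, abs_of_nonneg hx0]; exact le_trans hxle hc2le1
            have h3 := Real.abs_exp_sub_one_sub_id_le h2
            have h4 : (-x) ^ 2 = x ^ 2 := by ring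
            rw [h4] at h3
            have h5 : x ^ 2 ≤ (2 * α * M * (T / (N:ℝ)) ^ 2) ^ 2 :=
              pow_le_pow_left₀ hx0 hxle 2
            linarith
        · rw [if_neg (by rintro ⟨m1, m2, -⟩; exact hmemc ⟨m1, m2⟩)]
          simp only [hFdef]
          rw [if_neg hmemc]
          simp only [zero_mul, mul_zero, sub_zero, abs_zero]
          exact add_nonneg (sq_nonneg _) hite
      simp only [hSSdef, hGdef, Real.norm_eq_abs, mul_div_assoc, Finset.mul_sum]
      simp only [← Finset.sum_sub_distrib]
      refine le_trans (Finset.abs_sum_le_sum_abs _ _) ?_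
      refine le_trans (Finset.sum_le_sum fun k _ => Finset.abs_sum_le_sum_abs _ _) ?_
      refine le_trans (Finset.sum_le_sum fun k _ => Finset.sum_le_sum fun l _ => hterm k l) ?_
      have hsum_l : ∀ k : ℕ,
          (∑ l ∈ Finset.range (N + 1), ((2 * α * M * (T / (N:ℝ)) ^ 2) ^ 2 + if l = k + 1 then 2 * α * M * (T / (N:ℝ)) ^ 2 else 0))
          ≤ ((N:ℝ) + 1) * (2 * α * M * (T / (N:ℝ)) ^ 2) ^ 2 + 2 * α * M * (T / (N:ℝ)) ^ 2 := by
        intro k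
        rw [Finset.sum_add_distrib, Finset.sum_const, Finset.card_range, nsmul_eq_mul,
          Finset.sum_ite_eq' (Finset.range (N + 1)) (k + 1) (fun _ => 2 * α * M * (T / (N:ℝ)) ^ 2)]
        push_cast
        refine add_le_add le_rfl ?_
        split
        · exact le_rfl
        · exact hc2
      refine le_trans (Finset.sum_le_sum fun k _ => hsum_l k) ?_
      rw [Finset.sum_const, Finset.card_range, nsmul_eq_mul]
      push_cast
      have hn1 : (1:ℝ) ≤ (N:ℝ) := by exact_mod_cast hN
      have hnp : (0:ℝ) < (N:ℝ) := by linarith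
      have hc2A : 2 * α * M * (T / (N:ℝ)) ^ 2 = A / (N:ℝ) ^ 2 := by
        rw [hAdef]
        field_simp
      rw [hc2A, le_div_iff₀ hnp]
      have e1 : ((N:ℝ) + 1) * (((N:ℝ) + 1) * (A / (N:ℝ) ^ 2) ^ 2 + A / (N:ℝ) ^ 2) * (N:ℝ)
          = (((N:ℝ) + 1) ^ 2 * A ^ 2 / (N:ℝ) ^ 3) + ((N:ℝ) + 1) * A / (N:ℝ) := by
        field_simp
      rw [e1]
      have h2n : ((N:ℝ) + 1) ^ 2 ≤ 4 * (N:ℝ) ^ 3 := by nlinarith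
      have t1 : ((N:ℝ) + 1) ^ 2 * A ^ 2 / (N:ℝ) ^ 3 ≤ 4 * A ^ 2 := by
        rw [div_le_iff₀ (by positivity)]
        nlinarith [mul_nonneg (sub_nonneg.2 h2n) (sq_nonneg A)]
      have t2 : ((N:ℝ) + 1) * A / (N:ℝ) ≤ 2 * A := by
        rw [div_le_iff₀ hnp]
        nlinarith [mul_nonneg hA0 (sub_nonneg.2 hn1)]
      linarith
    have hfin := herr.add hGlim
    rw [zero_add] at hfin
    have hfe : (fun N => SS N - 2 * α * G N + 2 * α * G N) = SS := by
      funext N; ring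
    rw [hfe] at hfin
    exact hfin
  ·
    have hM0 : 0 ≤ M := le_trans (abs_nonneg _) (hM 0)
    have hub : ∀ N : ℕ, ∀ k l : Fin (N + 1),
        (1 - Real.exp (-(2 * α * (T / N) ^ 2 * g ((l : ℝ) * T / N - (k : ℝ) * T / N))))
          ≤ 1 - Real.exp (-(2 * α * (T / N) ^ 2 * M)) := by
      intro N k l
      have h1 : 0 ≤ 2 * α * (T / (N:ℝ)) ^ 2 := by positivity
      have h2 : g ((l : ℝ) * T / N - (k : ℝ) * T / N) ≤ M :=
        le_trans (le_abs_self _) (hM _)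
      have := mul_le_mul_of_nonneg_left h2 h1
      have := Real.exp_le_exp.2 (neg_le_neg this)
      linarith
    have hlb : ∀ N : ℕ, ∀ k l : Fin (N + 1),
        (0:ℝ) ≤ 1 - Real.exp (-(2 * α * (T / N) ^ 2 * g ((l : ℝ) * T / N - (k : ℝ) * T / N))) := by
      intro N k l
      have h1 : 0 ≤ 2 * α * (T / (N:ℝ)) ^ 2 * g ((l : ℝ) * T / N - (k : ℝ) * T / N) := by
        have := hgnonneg ((l : ℝ) * T / N - (k : ℝ) * T / N); positivity
      have := Real.exp_le_exp.2 (neg_nonpos_of_nonneg h1)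
      simp only [Real.exp_zero] at this
      linarith
    have hupper : Tendsto (fun N : ℕ => 1 - Real.exp (-(2 * α * (T / N) ^ 2 * M))) atTop (𝓝 0) := by
      have hd : Tendsto (fun N : ℕ => T / (N:ℝ)) atTop (𝓝 0) := tendsto_const_div_atTop_nhds_zero_nat T
      have : Tendsto (fun N : ℕ => -(2 * α * (T / N) ^ 2 * M)) atTop (𝓝 (-(2 * α * (0:ℝ) ^ 2 * M))) := by
        exact (((tendsto_const_nhds.mul (hd.pow 2)).mul tendsto_const_nhds)).neg
      have h2 := (Real.continuous_exp.tendsto _).comp this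
      simp only [Function.comp_def] at h2
      have h3 : Tendsto (fun N : ℕ => 1 - Real.exp (-(2 * α * (T / N) ^ 2 * M))) atTop
          (𝓝 (1 - Real.exp (-(2 * α * (0:ℝ) ^ 2 * M)))) := tendsto_const_nhds.sub h2
      norm_num at h3
      exact h3
    refine tendsto_of_tendsto_of_tendsto_of_le_of_le
      tendsto_const_nhds hupper ?_ ?_
    · intro N
      refine le_ciSup_of_le (Set.Finite.bddAbove (Set.finite_range _)) ⟨0, Nat.succ_pos N⟩ ?_
      exact le_ciSup_of_le (Set.Finite.bddAbove (Set.finite_range _)) ⟨0, Nat.succ_pos N⟩ (hlb N _ _)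
    · intro N
      exact ciSup_le fun k => ciSup_le fun l => hub N k l
end
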